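/- Let (A,B,C) be the equilateral triangle with A = 1, B = (−1 + √3·I)/2, C = (−1 − √3·I)/2 and let M = 1 − √3. Let (A₁,B₁,C₁) be the image of (A,B,C) under the circumcenter map with respect to M, and (A₂,B₂,C₂) the image of (A₁,B₁,C₁). Then A₁ = 1, B₁ = (1 − √3/2) + (3/2 − √3)·I, C₁ = (1 − √3/2) + (√3 − 3/2)·I, A₂ = √3 − 2, B₂ = (1 − √3/2) − (3/2)·I, C₂ = (1 − √3/2) + (3/2)·I. Moreover the triangle (A₁,B₁,C₁) has interior angle π/6 at A₁ and 5π/12 at each of B₁ and C₁, and (A₂,B₂,C₂) has interior angle 5π/6 at A₂ and π/12 at each of B₂ and C₂. -/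

import Mathlib

open scoped Classical

/-- Circumcenter of three points of `ℂ` (junk value `0` if the points are collinear).
When the points are affinely independent this is the unique point equidistant from all three. -/
noncomputable def ccenter (A B C : ℂ) : ℂ :=
  if h : AffineIndependent ℝ ![A, B, C] then
    (⟨![A, B, C], h⟩ : Affine.Simplex ℝ ℂ 2).circumcenter
  else 0

/-- The circumcenter map on triangles: `(A,B,C)` is sent to
`(circumcenter(M,B,C), circumcenter(M,C,A), circumcenter(M,A,B))`. -/
noncomputable def tmap (M : ℂ) (T : ℂ × ℂ × ℂ) : ℂ × ℂ × ℂ :=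
  (ccenter M T.2.1 T.2.2, ccenter M T.2.2 T.1, ccenter M T.1 T.2.1)

/-- The circumcenter map is defined at `(M, T)`: each of the triples
`(M,B,C)`, `(M,C,A)`, `(M,A,B)` is non-collinear. -/
def TDef (M : ℂ) (T : ℂ × ℂ × ℂ) : Prop :=
  AffineIndependent ℝ ![M, T.2.1, T.2.2] ∧ AffineIndependent ℝ ![M, T.2.2, T.1] ∧
    AffineIndependent ℝ ![M, T.1, T.2.1]

lemma my_affineIndep (A B C : ℂ)
    (h : (B - A).re * (C - A).im - (B - A).im * (C - A).re ≠ 0) :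
    AffineIndependent ℝ ![A, B, C] := by
  rw [affineIndependent_iff_not_collinear_set]
  intro hc
  obtain ⟨v, hv⟩ := (collinear_iff_of_mem (Set.mem_insert A {B, C})).mp hc
  obtain ⟨r, hr⟩ := hv B (by simp)
  obtain ⟨t, ht⟩ := hv C (by simp)
  apply h
  rw [hr, ht]
  simp [Complex.real_smul, Complex.add_re, Complex.add_im, Complex.mul_re, Complex.mul_im]
  ring

lemma my_ccenter_eq (A B C P : ℂ) (h : AffineIndependent ℝ ![A, B, C])
    (h1 : dist A P = dist B P) (h2 : dist A P = dist C P) : ccenter A B C = P := by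
  rw [ccenter, dif_pos h]
  symm
  refine Affine.Simplex.eq_circumcenter_of_dist_eq _ ?_ (r := dist A P) ?_
  · have htop : affineSpan ℝ (Set.range ![A, B, C]) = ⊤ := by
      rw [h.affineSpan_eq_top_iff_card_eq_finrank_add_one]
      simp [Complex.finrank_real_complex]
    rw [show (⟨![A, B, C], h⟩ : Affine.Simplex ℝ ℂ 2).points = ![A, B, C] from rfl, htop]
    trivial
  · intro i
    fin_cases i
    · simp [Affine.Simplex.points, dist_comm]
    · simpa [Affine.Simplex.points, dist_comm] using h1.symm
    · simpa [Affine.Simplex.points, dist_comm] using h2.symm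

lemma my_dist_eq (z w u v : ℂ) (h : Complex.normSq (z - w) = Complex.normSq (u - v)) :
    dist z w = dist u v := by
  rw [Complex.dist_eq, Complex.dist_eq, Complex.norm_def, Complex.norm_def, h]

lemma my_sq_eq (a b : ℝ) (ha : 0 ≤ a) (hb : 0 ≤ b) (h : a ^ 2 = b ^ 2) : a = b := by
  rw [← Real.sqrt_sq ha, h, Real.sqrt_sq hb]

lemma my_angle_eq (x y : ℂ) (θ : ℝ) (h0 : 0 ≤ θ) (hπ : θ ≤ Real.pi)
    (hx : ‖x‖ ≠ 0) (hy : ‖y‖ ≠ 0)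
    (h : x.re * y.re + x.im * y.im = Real.cos θ * (‖x‖ * ‖y‖)) :
    InnerProductGeometry.angle x y = θ := by
  rw [InnerProductGeometry.angle]
  have hinner : (inner ℝ x y : ℝ) = x.re * y.re + x.im * y.im := by
    rw [Complex.inner]
    simp [Complex.mul_re]
    ring
  rw [hinner, h, mul_div_assoc, div_self (mul_ne_zero hx hy), mul_one,
    Real.arccos_cos h0 hπ]

lemma my_angle_main (p q r : ℂ) (θ c2 vin nx ny : ℝ)
    (h0 : 0 ≤ θ) (hπ : θ ≤ Real.pi)
    (hvin : (p - q).re * (r - q).re + (p - q).im * (r - q).im = vin)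
    (hnx : Complex.normSq (p - q) = nx) (hny : Complex.normSq (r - q) = ny)
    (hnx0 : nx ≠ 0) (hny0 : ny ≠ 0)
    (hc2 : Real.cos θ ^ 2 = c2)
    (hsq : vin ^ 2 = c2 * (nx * ny))
    (hsgn : 0 ≤ vin * Real.cos θ) :
    EuclideanGeometry.angle p q r = θ := by
  have hX : ‖p - q‖ ^ 2 = nx := by rw [← hnx, Complex.sq_norm]
  have hY : ‖r - q‖ ^ 2 = ny := by rw [← hny, Complex.sq_norm]
  have hX0 : ‖p - q‖ ≠ 0 := by
    intro h; apply hnx0; rw [← hX, h]; ring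
  have hY0 : ‖r - q‖ ≠ 0 := by
    intro h; apply hny0; rw [← hY, h]; ring
  have hXp : 0 < ‖p - q‖ := lt_of_le_of_ne (norm_nonneg _) (Ne.symm hX0)
  have hYp : 0 < ‖r - q‖ := lt_of_le_of_ne (norm_nonneg _) (Ne.symm hY0)
  have hXY : 0 < ‖p - q‖ * ‖r - q‖ := mul_pos hXp hYp
  have h2 : vin ^ 2 = (Real.cos θ * (‖p - q‖ * ‖r - q‖)) ^ 2 := by
    rw [mul_pow, mul_pow, hX, hY, hc2, hsq]
  have key : vin = Real.cos θ * (‖p - q‖ * ‖r - q‖) := by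
    rcases lt_trichotomy (Real.cos θ) 0 with hc | hc | hc
    · have hv : vin ≤ 0 := by nlinarith
      have h3 := my_sq_eq (-vin) (-(Real.cos θ * (‖p - q‖ * ‖r - q‖)))
        (by linarith) (by nlinarith) (by rw [neg_sq, neg_sq, h2])
      linarith
    · have hv2 : vin ^ 2 = 0 := by rw [h2, hc]; ring
      have hv : vin = 0 := pow_eq_zero_iff (two_ne_zero) |>.mp hv2
      rw [hv, hc]; ring
    · have hv : 0 ≤ vin := by nlinarith
      exact my_sq_eq _ _ hv (by positivity) h2
  have hdef : EuclideanGeometry.angle p q r = InnerProductGeometry.angle (p - q) (r - q) := rfl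
  rw [hdef]
  exact my_angle_eq _ _ θ h0 hπ hX0 hY0 (by rw [hvin]; exact key)

set_option maxHeartbeats 4000000 in
/-- With `M = 1 − √3`, the first and second images of the standard equilateral
triangle under the circumcenter map have the stated vertices and interior angles. -/
theorem equilateral_canonical_triangles_at_K2
    (A B C : ℂ) (hA : A = 1)
    (hB : B = (-1 + Real.sqrt 3 * Complex.I) / 2)
    (hC : C = (-1 - Real.sqrt 3 * Complex.I) / 2)
    (M : ℂ) (hM : M = 1 - (Real.sqrt 3 : ℂ)) :
    let T1 := tmap M (A, B, C)
    let T2 := tmap M T1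
    T1.1 = 1 ∧
    T1.2.1 = (1 - (Real.sqrt 3 : ℂ) / 2) + (3 / 2 - (Real.sqrt 3 : ℂ)) * Complex.I ∧
    T1.2.2 = (1 - (Real.sqrt 3 : ℂ) / 2) + ((Real.sqrt 3 : ℂ) - 3 / 2) * Complex.I ∧
    T2.1 = (Real.sqrt 3 : ℂ) - 2 ∧
    T2.2.1 = (1 - (Real.sqrt 3 : ℂ) / 2) - (3 / 2) * Complex.I ∧
    T2.2.2 = (1 - (Real.sqrt 3 : ℂ) / 2) + (3 / 2) * Complex.I ∧
    EuclideanGeometry.angle T1.2.1 T1.1 T1.2.2 = Real.pi / 6 ∧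
    EuclideanGeometry.angle T1.1 T1.2.1 T1.2.2 = 5 * Real.pi / 12 ∧
    EuclideanGeometry.angle T1.1 T1.2.2 T1.2.1 = 5 * Real.pi / 12 ∧
    EuclideanGeometry.angle T2.2.1 T2.1 T2.2.2 = 5 * Real.pi / 6 ∧
    EuclideanGeometry.angle T2.1 T2.2.1 T2.2.2 = Real.pi / 12 ∧
    EuclideanGeometry.angle T2.1 T2.2.2 T2.2.1 = Real.pi / 12 := by
  have hs3 : Real.sqrt 3 ^ 2 = 3 := Real.sq_sqrt (by norm_num)
  have hs30 : (0:ℝ) ≤ Real.sqrt 3 := Real.sqrt_nonneg 3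
  have hs2 : Real.sqrt 2 ^ 2 = 2 := Real.sq_sqrt (by norm_num)
  intro T1 T2
  -- affine independence
  have ai1 : AffineIndependent ℝ ![M, B, C] := by
    apply my_affineIndep
    rw [hM, hB, hC]
    intro h
    simp at h
    all_goals first
      | (rcases h with h | h <;> nlinarith [hs3, hs30, sq_nonneg ((Real.sqrt 3) - 2), sq_nonneg ((Real.sqrt 3) - 3/2)])
      | nlinarith [hs3, hs30, sq_nonneg ((Real.sqrt 3) - 2), sq_nonneg ((Real.sqrt 3) - 3/2)]
  have ai2 : AffineIndependent ℝ ![M, C, A] := by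
    apply my_affineIndep
    rw [hM, hC, hA]
    intro h
    simp at h
    all_goals first
      | (rcases h with h | h <;> nlinarith [hs3, hs30, sq_nonneg ((Real.sqrt 3) - 2), sq_nonneg ((Real.sqrt 3) - 3/2)])
      | nlinarith [hs3, hs30, sq_nonneg ((Real.sqrt 3) - 2), sq_nonneg ((Real.sqrt 3) - 3/2)]
  have ai3 : AffineIndependent ℝ ![M, A, B] := by
    apply my_affineIndep
    rw [hM, hA, hB]
    intro h
    simp at h
    all_goals first
      | (rcases h with h | h <;> nlinarith [hs3, hs30, sq_nonneg ((Real.sqrt 3) - 2), sq_nonneg ((Real.sqrt 3) - 3/2)])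
      | nlinarith [hs3, hs30, sq_nonneg ((Real.sqrt 3) - 2), sq_nonneg ((Real.sqrt 3) - 3/2)]
  have ai4 : AffineIndependent ℝ ![M, ((1 - (Real.sqrt 3 : ℂ) / 2) + (3 / 2 - (Real.sqrt 3 : ℂ)) * Complex.I), ((1 - (Real.sqrt 3 : ℂ) / 2) + ((Real.sqrt 3 : ℂ) - 3 / 2) * Complex.I)] := by
    apply my_affineIndep
    rw [hM]
    intro h
    simp at h
    all_goals first
      | (rcases h with h | h <;> nlinarith [hs3, hs30, sq_nonneg ((Real.sqrt 3) - 2), sq_nonneg ((Real.sqrt 3) - 3/2)])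
      | nlinarith [hs3, hs30, sq_nonneg ((Real.sqrt 3) - 2), sq_nonneg ((Real.sqrt 3) - 3/2)]
  have ai5 : AffineIndependent ℝ ![M, ((1 - (Real.sqrt 3 : ℂ) / 2) + ((Real.sqrt 3 : ℂ) - 3 / 2) * Complex.I), (1 : ℂ)] := by
    apply my_affineIndep
    rw [hM]
    intro h
    simp at h
    all_goals first
      | (rcases h with h | h <;> nlinarith [hs3, hs30, sq_nonneg ((Real.sqrt 3) - 2), sq_nonneg ((Real.sqrt 3) - 3/2)])
      | nlinarith [hs3, hs30, sq_nonneg ((Real.sqrt 3) - 2), sq_nonneg ((Real.sqrt 3) - 3/2)]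
  have ai6 : AffineIndependent ℝ ![M, (1 : ℂ), ((1 - (Real.sqrt 3 : ℂ) / 2) + (3 / 2 - (Real.sqrt 3 : ℂ)) * Complex.I)] := by
    apply my_affineIndep
    rw [hM]
    intro h
    simp at h
    all_goals first
      | (rcases h with h | h <;> nlinarith [hs3, hs30, sq_nonneg ((Real.sqrt 3) - 2), sq_nonneg ((Real.sqrt 3) - 3/2)])
      | nlinarith [hs3, hs30, sq_nonneg ((Real.sqrt 3) - 2), sq_nonneg ((Real.sqrt 3) - 3/2)]
  -- the six circumcenters
  have e1 : T1.1 = (1 : ℂ) := by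
    show ccenter M B C = (1 : ℂ)
    refine my_ccenter_eq _ _ _ _ ai1 ?_ ?_
    · apply my_dist_eq
      rw [hM, hB]
      simp only [Complex.normSq_apply, Complex.sub_re, Complex.sub_im, Complex.add_re, Complex.add_im, Complex.mul_re, Complex.mul_im, Complex.neg_re, Complex.neg_im, Complex.div_re, Complex.div_im, Complex.I_re, Complex.I_im, Complex.one_re, Complex.one_im, Complex.ofReal_re, Complex.ofReal_im, Complex.re_ofNat, Complex.im_ofNat]
      linear_combination (3/4) * hs3
    · apply my_dist_eq
      rw [hM, hC]
      simp only [Complex.normSq_apply, Complex.sub_re, Complex.sub_im, Complex.add_re, Complex.add_im, Complex.mul_re, Complex.mul_im, Complex.neg_re, Complex.neg_im, Complex.div_re, Complex.div_im, Complex.I_re, Complex.I_im, Complex.one_re, Complex.one_im, Complex.ofReal_re, Complex.ofReal_im, Complex.re_ofNat, Complex.im_ofNat]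
      linear_combination (3/4) * hs3
  have e2 : T1.2.1 = ((1 - (Real.sqrt 3 : ℂ) / 2) + (3 / 2 - (Real.sqrt 3 : ℂ)) * Complex.I) := by
    show ccenter M C A = ((1 - (Real.sqrt 3 : ℂ) / 2) + (3 / 2 - (Real.sqrt 3 : ℂ)) * Complex.I)
    refine my_ccenter_eq _ _ _ _ ai2 ?_ ?_
    · apply my_dist_eq
      rw [hM, hC]
      simp only [Complex.normSq_apply, Complex.sub_re, Complex.sub_im, Complex.add_re, Complex.add_im, Complex.mul_re, Complex.mul_im, Complex.neg_re, Complex.neg_im, Complex.div_re, Complex.div_im, Complex.I_re, Complex.I_im, Complex.one_re, Complex.one_im, Complex.ofReal_re, Complex.ofReal_im, Complex.re_ofNat, Complex.im_ofNat]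
      linear_combination (3/4) * hs3
    · apply my_dist_eq
      rw [hM, hA]
      simp only [Complex.normSq_apply, Complex.sub_re, Complex.sub_im, Complex.add_re, Complex.add_im, Complex.mul_re, Complex.mul_im, Complex.neg_re, Complex.neg_im, Complex.div_re, Complex.div_im, Complex.I_re, Complex.I_im, Complex.one_re, Complex.one_im, Complex.ofReal_re, Complex.ofReal_im, Complex.re_ofNat, Complex.im_ofNat]
      first
        | ring
        | linear_combination hs3
        | linear_combination (-1 : ℝ) * hs3
  have e3 : T1.2.2 = ((1 - (Real.sqrt 3 : ℂ) / 2) + ((Real.sqrt 3 : ℂ) - 3 / 2) * Complex.I) := by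
    show ccenter M A B = ((1 - (Real.sqrt 3 : ℂ) / 2) + ((Real.sqrt 3 : ℂ) - 3 / 2) * Complex.I)
    refine my_ccenter_eq _ _ _ _ ai3 ?_ ?_
    · apply my_dist_eq
      rw [hM, hA]
      simp only [Complex.normSq_apply, Complex.sub_re, Complex.sub_im, Complex.add_re, Complex.add_im, Complex.mul_re, Complex.mul_im, Complex.neg_re, Complex.neg_im, Complex.div_re, Complex.div_im, Complex.I_re, Complex.I_im, Complex.one_re, Complex.one_im, Complex.ofReal_re, Complex.ofReal_im, Complex.re_ofNat, Complex.im_ofNat]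
      first
        | ring
        | linear_combination hs3
        | linear_combination (-1 : ℝ) * hs3
    · apply my_dist_eq
      rw [hM, hB]
      simp only [Complex.normSq_apply, Complex.sub_re, Complex.sub_im, Complex.add_re, Complex.add_im, Complex.mul_re, Complex.mul_im, Complex.neg_re, Complex.neg_im, Complex.div_re, Complex.div_im, Complex.I_re, Complex.I_im, Complex.one_re, Complex.one_im, Complex.ofReal_re, Complex.ofReal_im, Complex.re_ofNat, Complex.im_ofNat]
      linear_combination (3/4) * hs3
  have e4 : T2.1 = ((Real.sqrt 3 : ℂ) - 2) := by
    show ccenter M T1.2.1 T1.2.2 = ((Real.sqrt 3 : ℂ) - 2)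
    rw [e2, e3]
    refine my_ccenter_eq _ _ _ _ ai4 ?_ ?_
    · apply my_dist_eq
      rw [hM]
      simp only [Complex.normSq_apply, Complex.sub_re, Complex.sub_im, Complex.add_re, Complex.add_im, Complex.mul_re, Complex.mul_im, Complex.neg_re, Complex.neg_im, Complex.div_re, Complex.div_im, Complex.I_re, Complex.I_im, Complex.one_re, Complex.one_im, Complex.ofReal_re, Complex.ofReal_im, Complex.re_ofNat, Complex.im_ofNat]
      linear_combination (3/4) * hs3
    · apply my_dist_eq
      rw [hM]
      simp only [Complex.normSq_apply, Complex.sub_re, Complex.sub_im, Complex.add_re, Complex.add_im, Complex.mul_re, Complex.mul_im, Complex.neg_re, Complex.neg_im, Complex.div_re, Complex.div_im, Complex.I_re, Complex.I_im, Complex.one_re, Complex.one_im, Complex.ofReal_re, Complex.ofReal_im, Complex.re_ofNat, Complex.im_ofNat]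
      linear_combination (3/4) * hs3
  have e5 : T2.2.1 = ((1 - (Real.sqrt 3 : ℂ) / 2) - (3 / 2) * Complex.I) := by
    show ccenter M T1.2.2 T1.1 = ((1 - (Real.sqrt 3 : ℂ) / 2) - (3 / 2) * Complex.I)
    rw [e3, e1]
    refine my_ccenter_eq _ _ _ _ ai5 ?_ ?_
    · apply my_dist_eq
      rw [hM]
      simp only [Complex.normSq_apply, Complex.sub_re, Complex.sub_im, Complex.add_re, Complex.add_im, Complex.mul_re, Complex.mul_im, Complex.neg_re, Complex.neg_im, Complex.div_re, Complex.div_im, Complex.I_re, Complex.I_im, Complex.one_re, Complex.one_im, Complex.ofReal_re, Complex.ofReal_im, Complex.re_ofNat, Complex.im_ofNat]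
      linear_combination (-3/4) * hs3
    · apply my_dist_eq
      rw [hM]
      simp only [Complex.normSq_apply, Complex.sub_re, Complex.sub_im, Complex.add_re, Complex.add_im, Complex.mul_re, Complex.mul_im, Complex.neg_re, Complex.neg_im, Complex.div_re, Complex.div_im, Complex.I_re, Complex.I_im, Complex.one_re, Complex.one_im, Complex.ofReal_re, Complex.ofReal_im, Complex.re_ofNat, Complex.im_ofNat]
      first
        | ring
        | linear_combination hs3
        | linear_combination (-1 : ℝ) * hs3
  have e6 : T2.2.2 = ((1 - (Real.sqrt 3 : ℂ) / 2) + (3 / 2) * Complex.I) := by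
    show ccenter M T1.1 T1.2.1 = ((1 - (Real.sqrt 3 : ℂ) / 2) + (3 / 2) * Complex.I)
    rw [e1, e2]
    refine my_ccenter_eq _ _ _ _ ai6 ?_ ?_
    · apply my_dist_eq
      rw [hM]
      simp only [Complex.normSq_apply, Complex.sub_re, Complex.sub_im, Complex.add_re, Complex.add_im, Complex.mul_re, Complex.mul_im, Complex.neg_re, Complex.neg_im, Complex.div_re, Complex.div_im, Complex.I_re, Complex.I_im, Complex.one_re, Complex.one_im, Complex.ofReal_re, Complex.ofReal_im, Complex.re_ofNat, Complex.im_ofNat]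
      first
        | ring
        | linear_combination hs3
        | linear_combination (-1 : ℝ) * hs3
    · apply my_dist_eq
      rw [hM]
      simp only [Complex.normSq_apply, Complex.sub_re, Complex.sub_im, Complex.add_re, Complex.add_im, Complex.mul_re, Complex.mul_im, Complex.neg_re, Complex.neg_im, Complex.div_re, Complex.div_im, Complex.I_re, Complex.I_im, Complex.one_re, Complex.one_im, Complex.ofReal_re, Complex.ofReal_im, Complex.re_ofNat, Complex.im_ofNat]
      linear_combination (-3/4) * hs3
  have hpi := Real.pi_pos
  -- cosine facts
  have hc512 : Real.cos (5 * Real.pi / 12) ^ 2 = (2 - (Real.sqrt 3)) / 4 := by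
    rw [show 5 * Real.pi / 12 = Real.pi / 4 + Real.pi / 6 by ring, Real.cos_add,
      Real.cos_pi_div_four, Real.sin_pi_div_four, Real.cos_pi_div_six, Real.sin_pi_div_six]
    linear_combination (1/8) * hs3 + ((Real.sqrt 3 - 1)^2/16) * hs2
  have hc112 : Real.cos (Real.pi / 12) ^ 2 = (2 + (Real.sqrt 3)) / 4 := by
    rw [show Real.pi / 12 = Real.pi / 4 - Real.pi / 6 by ring, Real.cos_sub,
      Real.cos_pi_div_four, Real.sin_pi_div_four, Real.cos_pi_div_six, Real.sin_pi_div_six]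
    linear_combination (1/8) * hs3 + ((Real.sqrt 3 + 1)^2/16) * hs2
  have hc512pos : 0 ≤ Real.cos (5 * Real.pi / 12) :=
    Real.cos_nonneg_of_mem_Icc ⟨by linarith, by linarith⟩
  have hc112pos : 0 ≤ Real.cos (Real.pi / 12) :=
    Real.cos_nonneg_of_mem_Icc ⟨by linarith, by linarith⟩
  have hvin512 : (0:ℝ) ≤ 21/2 - 6*(Real.sqrt 3) := by nlinarith [hs3, hs30, sq_nonneg ((Real.sqrt 3) - 7/4)]
  refine ⟨e1, e2, e3, e4, e5, e6, ?_, ?_, ?_, ?_, ?_, ?_⟩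
  · -- angle at A1 : pi/6
    refine my_angle_main _ _ _ _ (3/4) (3*(Real.sqrt 3) - 9/2) (6 - 3*(Real.sqrt 3)) (6 - 3*(Real.sqrt 3))
      (by positivity) (by linarith) ?_ ?_ ?_ ?_ ?_ ?_ ?_ ?_
    · rw [e2, e1, e3]
      simp only [Complex.normSq_apply, Complex.sub_re, Complex.sub_im, Complex.add_re, Complex.add_im, Complex.mul_re, Complex.mul_im, Complex.neg_re, Complex.neg_im, Complex.div_re, Complex.div_im, Complex.I_re, Complex.I_im, Complex.one_re, Complex.one_im, Complex.ofReal_re, Complex.ofReal_im, Complex.re_ofNat, Complex.im_ofNat]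
      linear_combination (-3/4) * hs3
    · rw [e2, e1]
      simp only [Complex.normSq_apply, Complex.sub_re, Complex.sub_im, Complex.add_re, Complex.add_im, Complex.mul_re, Complex.mul_im, Complex.neg_re, Complex.neg_im, Complex.div_re, Complex.div_im, Complex.I_re, Complex.I_im, Complex.one_re, Complex.one_im, Complex.ofReal_re, Complex.ofReal_im, Complex.re_ofNat, Complex.im_ofNat]
      linear_combination (5/4) * hs3
    · rw [e3, e1]
      simp only [Complex.normSq_apply, Complex.sub_re, Complex.sub_im, Complex.add_re, Complex.add_im, Complex.mul_re, Complex.mul_im, Complex.neg_re, Complex.neg_im, Complex.div_re, Complex.div_im, Complex.I_re, Complex.I_im, Complex.one_re, Complex.one_im, Complex.ofReal_re, Complex.ofReal_im, Complex.re_ofNat, Complex.im_ofNat]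
      linear_combination (5/4) * hs3
    · intro h; nlinarith [hs3, hs30, sq_nonneg ((Real.sqrt 3) - 2)]
    · intro h; nlinarith [hs3, hs30, sq_nonneg ((Real.sqrt 3) - 2)]
    · rw [Real.cos_pi_div_six]
      linear_combination (1/4) * hs3
    · linear_combination (9/4) * hs3
    · rw [Real.cos_pi_div_six]
      nlinarith [hs3, hs30, sq_nonneg ((Real.sqrt 3) - 2), sq_nonneg ((Real.sqrt 3) - 3/2)]
  · -- angle at B1 : 5pi/12
    refine my_angle_main _ _ _ _ ((2 - (Real.sqrt 3))/4) (21/2 - 6*(Real.sqrt 3)) (6 - 3*(Real.sqrt 3)) (21 - 12*(Real.sqrt 3))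
      (by positivity) (by linarith) ?_ ?_ ?_ ?_ ?_ hc512 ?_ ?_
    · rw [e2, e1, e3]
      simp only [Complex.normSq_apply, Complex.sub_re, Complex.sub_im, Complex.add_re, Complex.add_im, Complex.mul_re, Complex.mul_im, Complex.neg_re, Complex.neg_im, Complex.div_re, Complex.div_im, Complex.I_re, Complex.I_im, Complex.one_re, Complex.one_im, Complex.ofReal_re, Complex.ofReal_im, Complex.re_ofNat, Complex.im_ofNat]
      linear_combination 2 * hs3
    · rw [e2, e1]
      simp only [Complex.normSq_apply, Complex.sub_re, Complex.sub_im, Complex.add_re, Complex.add_im, Complex.mul_re, Complex.mul_im, Complex.neg_re, Complex.neg_im, Complex.div_re, Complex.div_im, Complex.I_re, Complex.I_im, Complex.one_re, Complex.one_im, Complex.ofReal_re, Complex.ofReal_im, Complex.re_ofNat, Complex.im_ofNat]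
      linear_combination (5/4) * hs3
    · rw [e3, e2]
      simp only [Complex.normSq_apply, Complex.sub_re, Complex.sub_im, Complex.add_re, Complex.add_im, Complex.mul_re, Complex.mul_im, Complex.neg_re, Complex.neg_im, Complex.div_re, Complex.div_im, Complex.I_re, Complex.I_im, Complex.one_re, Complex.one_im, Complex.ofReal_re, Complex.ofReal_im, Complex.re_ofNat, Complex.im_ofNat]
      linear_combination 4 * hs3
    · intro h; nlinarith [hs3, hs30, sq_nonneg ((Real.sqrt 3) - 2)]
    · intro h; nlinarith [hs3, hs30, sq_nonneg ((Real.sqrt 3) - 7/4)]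
    · linear_combination (9*(Real.sqrt 3) - 63/4) * hs3
    · exact mul_nonneg hvin512 hc512pos
  · -- angle at C1 : 5pi/12
    refine my_angle_main _ _ _ _ ((2 - (Real.sqrt 3))/4) (21/2 - 6*(Real.sqrt 3)) (6 - 3*(Real.sqrt 3)) (21 - 12*(Real.sqrt 3))
      (by positivity) (by linarith) ?_ ?_ ?_ ?_ ?_ hc512 ?_ ?_
    · rw [e3, e1, e2]
      simp only [Complex.normSq_apply, Complex.sub_re, Complex.sub_im, Complex.add_re, Complex.add_im, Complex.mul_re, Complex.mul_im, Complex.neg_re, Complex.neg_im, Complex.div_re, Complex.div_im, Complex.I_re, Complex.I_im, Complex.one_re, Complex.one_im, Complex.ofReal_re, Complex.ofReal_im, Complex.re_ofNat, Complex.im_ofNat]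
      linear_combination 2 * hs3
    · rw [e3, e1]
      simp only [Complex.normSq_apply, Complex.sub_re, Complex.sub_im, Complex.add_re, Complex.add_im, Complex.mul_re, Complex.mul_im, Complex.neg_re, Complex.neg_im, Complex.div_re, Complex.div_im, Complex.I_re, Complex.I_im, Complex.one_re, Complex.one_im, Complex.ofReal_re, Complex.ofReal_im, Complex.re_ofNat, Complex.im_ofNat]
      linear_combination (5/4) * hs3
    · rw [e3, e2]
      simp only [Complex.normSq_apply, Complex.sub_re, Complex.sub_im, Complex.add_re, Complex.add_im, Complex.mul_re, Complex.mul_im, Complex.neg_re, Complex.neg_im, Complex.div_re, Complex.div_im, Complex.I_re, Complex.I_im, Complex.one_re, Complex.one_im, Complex.ofReal_re, Complex.ofReal_im, Complex.re_ofNat, Complex.im_ofNat]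
      linear_combination 4 * hs3
    · intro h; nlinarith [hs3, hs30, sq_nonneg ((Real.sqrt 3) - 2)]
    · intro h; nlinarith [hs3, hs30, sq_nonneg ((Real.sqrt 3) - 7/4)]
    · linear_combination (9*(Real.sqrt 3) - 63/4) * hs3
    · exact mul_nonneg hvin512 hc512pos
  · -- angle at A2 : 5pi/6
    refine my_angle_main _ _ _ _ (3/4) (27/2 - 9*(Real.sqrt 3)) (18 - 9*(Real.sqrt 3)) (18 - 9*(Real.sqrt 3))
      (by positivity) (by linarith) ?_ ?_ ?_ ?_ ?_ ?_ ?_ ?_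
    · rw [e5, e4, e6]
      simp only [Complex.normSq_apply, Complex.sub_re, Complex.sub_im, Complex.add_re, Complex.add_im, Complex.mul_re, Complex.mul_im, Complex.neg_re, Complex.neg_im, Complex.div_re, Complex.div_im, Complex.I_re, Complex.I_im, Complex.one_re, Complex.one_im, Complex.ofReal_re, Complex.ofReal_im, Complex.re_ofNat, Complex.im_ofNat]
      linear_combination (9/4) * hs3
    · rw [e5, e4]
      simp only [Complex.normSq_apply, Complex.sub_re, Complex.sub_im, Complex.add_re, Complex.add_im, Complex.mul_re, Complex.mul_im, Complex.neg_re, Complex.neg_im, Complex.div_re, Complex.div_im, Complex.I_re, Complex.I_im, Complex.one_re, Complex.one_im, Complex.ofReal_re, Complex.ofReal_im, Complex.re_ofNat, Complex.im_ofNat]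
      linear_combination (9/4) * hs3
    · rw [e6, e4]
      simp only [Complex.normSq_apply, Complex.sub_re, Complex.sub_im, Complex.add_re, Complex.add_im, Complex.mul_re, Complex.mul_im, Complex.neg_re, Complex.neg_im, Complex.div_re, Complex.div_im, Complex.I_re, Complex.I_im, Complex.one_re, Complex.one_im, Complex.ofReal_re, Complex.ofReal_im, Complex.re_ofNat, Complex.im_ofNat]
      linear_combination (9/4) * hs3
    · intro h; nlinarith [hs3, hs30, sq_nonneg ((Real.sqrt 3) - 2)]
    · intro h; nlinarith [hs3, hs30, sq_nonneg ((Real.sqrt 3) - 2)]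
    · rw [show 5 * Real.pi / 6 = Real.pi - Real.pi / 6 by ring, Real.cos_pi_sub,
        Real.cos_pi_div_six]
      linear_combination (1/4) * hs3
    · linear_combination (81/4) * hs3
    · rw [show 5 * Real.pi / 6 = Real.pi - Real.pi / 6 by ring, Real.cos_pi_sub,
        Real.cos_pi_div_six]
      nlinarith [hs3, hs30, sq_nonneg ((Real.sqrt 3) - 2), sq_nonneg ((Real.sqrt 3) - 3/2)]
  · -- angle at B2 : pi/12
    refine my_angle_main _ _ _ _ ((2 + (Real.sqrt 3))/4) (9/2) (18 - 9*(Real.sqrt 3)) 9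
      (by positivity) (by linarith) ?_ ?_ ?_ ?_ (by norm_num) hc112 ?_ ?_
    · rw [e4, e5, e6]
      simp
      norm_num
    · rw [e4, e5]
      simp only [Complex.normSq_apply, Complex.sub_re, Complex.sub_im, Complex.add_re, Complex.add_im, Complex.mul_re, Complex.mul_im, Complex.neg_re, Complex.neg_im, Complex.div_re, Complex.div_im, Complex.I_re, Complex.I_im, Complex.one_re, Complex.one_im, Complex.ofReal_re, Complex.ofReal_im, Complex.re_ofNat, Complex.im_ofNat]
      linear_combination (9/4) * hs3
    · rw [e6, e5]
      simp only [Complex.normSq_apply, Complex.sub_re, Complex.sub_im, Complex.add_re, Complex.add_im, Complex.mul_re, Complex.mul_im, Complex.neg_re, Complex.neg_im, Complex.div_re, Complex.div_im, Complex.I_re, Complex.I_im, Complex.one_re, Complex.one_im, Complex.ofReal_re, Complex.ofReal_im, Complex.re_ofNat, Complex.im_ofNat]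
      ring
    · intro h; nlinarith [hs3, hs30, sq_nonneg ((Real.sqrt 3) - 2)]
    · linear_combination (81/4) * hs3
    · exact mul_nonneg (by norm_num) hc112pos
  · -- angle at C2 : pi/12
    refine my_angle_main _ _ _ _ ((2 + (Real.sqrt 3))/4) (9/2) (18 - 9*(Real.sqrt 3)) 9
      (by positivity) (by linarith) ?_ ?_ ?_ ?_ (by norm_num) hc112 ?_ ?_
    · rw [e4, e6, e5]
      simp
      norm_num
    · rw [e4, e6]
      simp only [Complex.normSq_apply, Complex.sub_re, Complex.sub_im, Complex.add_re, Complex.add_im, Complex.mul_re, Complex.mul_im, Complex.neg_re, Complex.neg_im, Complex.div_re, Complex.div_im, Complex.I_re, Complex.I_im, Complex.one_re, Complex.one_im, Complex.ofReal_re, Complex.ofReal_im, Complex.re_ofNat, Complex.im_ofNat]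
      linear_combination (9/4) * hs3
    · rw [e5, e6]
      simp only [Complex.normSq_apply, Complex.sub_re, Complex.sub_im, Complex.add_re, Complex.add_im, Complex.mul_re, Complex.mul_im, Complex.neg_re, Complex.neg_im, Complex.div_re, Complex.div_im, Complex.I_re, Complex.I_im, Complex.one_re, Complex.one_im, Complex.ofReal_re, Complex.ofReal_im, Complex.re_ofNat, Complex.im_ofNat]
      ring
    · intro h; nlinarith [hs3, hs30, sq_nonneg ((Real.sqrt 3) - 2)]
    · linear_combination (81/4) * hs3
    · exact mul_nonneg (by norm_num) hc112pos
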